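/- Periodic best-mate initiatives converge in at most B/2 rounds: in an acyclic b-matching preference instance, call a round any finite sequence of best-mate initiatives in which every peer of P takes exactly one best-mate initiative, the order of peers within each round being arbitrary and possibly different from round to round. Then starting from any configuration, the configuration obtained after ⌈B/2⌉ rounds is the unique stable configuration of the instance, where B = Σ_{p∈P} b(p) is the sum of all quotas. -/

import Mathlib

/-!
A formalization of b-matching preference instances (peers, acceptance graph,
quotas, preference lists given by ranks), configurations, blocking pairs,
stability, active initiatives, loving pairs, and acyclicity.
-/

open Finset

/-- A b-matching preference instance on a finite set `P` of peers:
an acceptance graph `G`, quotas `b`, and for each peer `p` a rank function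
(`rank p q` is the position of `q` in `p`'s preference list, smaller is better),
injective on the neighbors of `p` (strict preferences). -/
structure PrefInstance (P : Type*) [Fintype P] [DecidableEq P] where
  G : SimpleGraph P
  b : P → ℕ
  rank : P → P → ℕ
  rank_injOn : ∀ p : P, Set.InjOn (rank p) {q | G.Adj p q}

namespace PrefInstance

variable {P : Type*} [Fintype P] [DecidableEq P] (I : PrefInstance P)

/-- `p` prefers `q` to `r` (both neighbors of `p`, `q` ranked better). -/
def Prefers (p q r : P) : Prop :=
  I.G.Adj p q ∧ I.G.Adj p r ∧ I.rank p q < I.rank p r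

/-- The instance is acyclic: there is no preference cycle, i.e. no `k ≥ 3`
distinct peers `p_1, …, p_k` (indices modulo `k`) such that each `p_i`
prefers `p_{i+1}` to `p_{i-1}`. -/
def Acyclic : Prop :=
  ¬ ∃ (k : ℕ) (f : ZMod k → P), 3 ≤ k ∧ Function.Injective f ∧
      ∀ i : ZMod k, I.Prefers (f i) (f (i + 1)) (f (i - 1))

/-- The mates of `p` in a set `C` of edges. -/
def mates (C : Finset (Sym2 P)) (p : P) : Finset P :=
  Finset.univ.filter fun q => s(p, q) ∈ C

/-- `C` is a configuration: a set of edges of the acceptance graph in which every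
peer `p` has at most `b p` mates. -/
def IsConfig (C : Finset (Sym2 P)) : Prop :=
  (∀ e ∈ C, e ∈ I.G.edgeSet) ∧ ∀ p : P, (mates C p).card ≤ I.b p

/-- `p` is under-mated in `C`: it has fewer than `b p` mates. -/
def UnderMated (C : Finset (Sym2 P)) (p : P) : Prop :=
  (mates C p).card < I.b p

/-- `p` is willing to pair with `q`: it is under-mated, or it prefers `q`
to its worst mate in `C`. -/
def Willing (C : Finset (Sym2 P)) (p q : P) : Prop :=
  I.UnderMated C p ∨ ∃ w ∈ mates C p, I.rank p q < I.rank p w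

/-- `{p, q}` is a blocking pair for `C`: an edge of the acceptance graph not in
`C` such that each endpoint is under-mated or prefers the other to its worst mate. -/
def BlockingPair (C : Finset (Sym2 P)) (p q : P) : Prop :=
  I.G.Adj p q ∧ s(p, q) ∉ C ∧ I.Willing C p q ∧ I.Willing C q p

/-- A configuration is stable if it admits no blocking pair. -/
def IsStable (C : Finset (Sym2 P)) : Prop :=
  I.IsConfig C ∧ ∀ p q : P, ¬ I.BlockingPair C p q

/-- The edges to be dropped at `p` when `p` gets a new mate: none if `p` is
under-mated, otherwise the edge joining `p` to its worst mate in `C`. -/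
def dropEdges (C : Finset (Sym2 P)) (p : P) : Finset (Sym2 P) :=
  if (mates C p).card < I.b p then ∅
  else ((mates C p).filter fun w => ∀ r ∈ mates C p, I.rank p r ≤ I.rank p w).image
      fun w => s(p, w)

/-- The configuration produced by resolving the blocking pair `{p, q}` of `C`:
add the edge `{p, q}` and, for each of `p` and `q` already at full quota,
remove the edge joining it to its worst mate. -/
def resolve (C : Finset (Sym2 P)) (p q : P) : Finset (Sym2 P) :=
  insert s(p, q) (C \ (I.dropEdges C p ∪ I.dropEdges C q))

/-- `C'` is obtained from `C` by an active initiative. -/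
def ActiveStep (C C' : Finset (Sym2 P)) : Prop :=
  ∃ p q : P, I.BlockingPair C p q ∧ C' = I.resolve C p q

/-- `{p, q}` is a loving pair: an edge of the acceptance graph whose endpoints
rank each other first. -/
def LovingPair (p q : P) : Prop :=
  I.G.Adj p q ∧ (∀ r : P, I.G.Adj p r → I.rank p q ≤ I.rank p r) ∧
    ∀ r : P, I.G.Adj q r → I.rank q p ≤ I.rank q r

open scoped Classical in
/-- The best-mate initiative of peer `p` at configuration `C`: resolve the
blocking pair `{p, q}` where `q` is the peer `p` prefers most among all peers
forming a blocking pair with `p`; if `p` belongs to no blocking pair, `C` is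
left unchanged. -/
noncomputable def bestMateInit (C : Finset (Sym2 P)) (p : P) : Finset (Sym2 P) :=
  if h : ∃ q : P, I.BlockingPair C p q ∧
      ∀ r : P, I.BlockingPair C p r → I.rank p q ≤ I.rank p r then
    I.resolve C p h.choose
  else C

end PrefInstance

variable {P : Type*} [Fintype P] [DecidableEq P]

open PrefInstance


namespace Aux
open scoped Classical
open PrefInstance
variable {P : Type*} [Fintype P] [DecidableEq P] (I : PrefInstance P)

theorem mem_mates {C : Finset (Sym2 P)} {p q : P} :
    q ∈ mates C p ↔ s(p, q) ∈ C := by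
  simp [PrefInstance.mates]

theorem mem_mates_comm {C : Finset (Sym2 P)} {p q : P} :
    q ∈ mates C p ↔ p ∈ mates C q := by
  rw [mem_mates, mem_mates, Sym2.eq_swap]

variable {I}

theorem adj_of_mem_mates {C : Finset (Sym2 P)} (hC : I.IsConfig C) {p q : P}
    (h : q ∈ mates C p) : I.G.Adj p q := by
  have := hC.1 _ (mem_mates.1 h)
  rwa [SimpleGraph.mem_edgeSet] at this

theorem b_pos_of_mem_mates {C : Finset (Sym2 P)} (hC : I.IsConfig C) {p q : P}
    (h : q ∈ mates C p) : 1 ≤ I.b q := by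
  have hq : p ∈ mates C q := mem_mates_comm.1 h
  have : 1 ≤ (mates C q).card := Finset.card_pos.2 ⟨p, hq⟩
  exact this.trans (hC.2 q)

theorem b_pos_of_willing {C : Finset (Sym2 P)} (hC : I.IsConfig C) {p q : P}
    (h : I.Willing C p q) : 1 ≤ I.b p := by
  rcases h with h | ⟨w, hw, _⟩
  · exact Nat.one_le_iff_ne_zero.2 fun h0 => by simp [PrefInstance.UnderMated, h0] at h
  · have : 1 ≤ (mates C p).card := Finset.card_pos.2 ⟨w, hw⟩
    exact this.trans (hC.2 p)

theorem exists_worst {C : Finset (Sym2 P)} {p : P} (h : (mates C p).Nonempty) :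
    ∃ w ∈ mates C p, ∀ r ∈ mates C p, I.rank p r ≤ I.rank p w :=
  Finset.exists_max_image _ _ h

theorem mem_dropEdges {C : Finset (Sym2 P)} {p : P} {e : Sym2 P} :
    e ∈ I.dropEdges C p ↔ ¬ (mates C p).card < I.b p ∧
      ∃ w ∈ mates C p, (∀ r ∈ mates C p, I.rank p r ≤ I.rank p w) ∧ e = s(p, w) := by
  unfold PrefInstance.dropEdges
  split
  · simp_all
  · simp_all [eq_comm, and_assoc]

theorem mem_resolve {C : Finset (Sym2 P)} {p q : P} {e : Sym2 P} :
    e ∈ I.resolve C p q ↔ e = s(p, q) ∨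
      (e ∈ C ∧ e ∉ I.dropEdges C p ∧ e ∉ I.dropEdges C q) := by
  simp [PrefInstance.resolve, and_assoc]






theorem resolve_comm {C : Finset (Sym2 P)} {p q : P} :
    I.resolve C p q = I.resolve C q p := by
  unfold PrefInstance.resolve
  rw [Sym2.eq_swap, Finset.union_comm]

theorem blockingPair_symm {C : Finset (Sym2 P)} {p q : P}
    (h : I.BlockingPair C p q) : I.BlockingPair C q p :=
  ⟨h.1.symm, by rw [Sym2.eq_swap]; exact h.2.1, h.2.2.2, h.2.2.1⟩

theorem card_mates_resolve_le {C : Finset (Sym2 P)} (hC : I.IsConfig C) {x y : P}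
    (hxy : x ≠ y) (hw : I.Willing C x y) :
    (mates (I.resolve C x y) x).card ≤ I.b x := by
  by_cases hu : (mates C x).card < I.b x
  · have hsub : mates (I.resolve C x y) x ⊆ insert y (mates C x) := by
      intro u hu'
      rw [mem_mates, mem_resolve] at hu'
      rcases hu' with h | ⟨h, _, _⟩
      · rw [Sym2.congr_right] at h; simp [h]
      · exact Finset.mem_insert_of_mem (mem_mates.2 h)
    calc (mates (I.resolve C x y) x).card ≤ (insert y (mates C x)).card :=
          Finset.card_le_card hsub
      _ ≤ (mates C x).card + 1 := Finset.card_insert_le _ _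
      _ ≤ I.b x := hu
  · have hne : (mates C x).Nonempty := by
      rcases hw with h | ⟨w, hw', _⟩
      · exact absurd h hu
      · exact ⟨w, hw'⟩
    obtain ⟨w, hwm, hmax⟩ := exists_worst hne
    have hdrop : s(x, w) ∈ I.dropEdges C x := mem_dropEdges.2 ⟨hu, w, hwm, hmax, rfl⟩
    have hsub : mates (I.resolve C x y) x ⊆ insert y ((mates C x).erase w) := by
      intro u hu'
      rw [mem_mates, mem_resolve] at hu'
      rcases hu' with h | ⟨h, hd, _⟩
      · rw [Sym2.congr_right] at h; simp [h]
      · refine Finset.mem_insert_of_mem (Finset.mem_erase.2 ⟨?_, mem_mates.2 h⟩)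
        rintro rfl; exact hd hdrop
    calc (mates (I.resolve C x y) x).card ≤ (insert y ((mates C x).erase w)).card :=
          Finset.card_le_card hsub
      _ ≤ ((mates C x).erase w).card + 1 := Finset.card_insert_le _ _
      _ = (mates C x).card - 1 + 1 := by rw [Finset.card_erase_of_mem hwm]
      _ = (mates C x).card := Nat.succ_pred_eq_of_pos (Finset.card_pos.2 hne)
      _ ≤ I.b x := hC.2 x

theorem isConfig_resolve {C : Finset (Sym2 P)} (hC : I.IsConfig C) {x y : P}
    (hbp : I.BlockingPair C x y) : I.IsConfig (I.resolve C x y) := by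
  have hxy : x ≠ y := hbp.1.ne
  constructor
  · intro e he
    rw [mem_resolve] at he
    rcases he with rfl | ⟨h, _, _⟩
    · exact hbp.1
    · exact hC.1 _ h
  · intro z
    by_cases hzx : z = x
    · subst hzx; exact card_mates_resolve_le hC hxy hbp.2.2.1
    by_cases hzy : z = y
    · subst hzy
      rw [resolve_comm]
      exact card_mates_resolve_le hC (Ne.symm hxy) hbp.2.2.2
    · refine le_trans (Finset.card_le_card ?_) (hC.2 z)
      intro u hu'
      rw [mem_mates, mem_resolve] at hu'
      rcases hu' with h | ⟨h, _, _⟩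
      · exfalso
        rcases Sym2.eq_iff.1 h with ⟨rfl, rfl⟩ | ⟨rfl, rfl⟩
        · exact hzx rfl
        · exact hzy rfl
      · exact mem_mates.2 h

theorem isConfig_bestMateInit {C : Finset (Sym2 P)} (hC : I.IsConfig C) (r : P) :
    I.IsConfig (I.bestMateInit C r) := by
  unfold PrefInstance.bestMateInit
  split
  · next h => exact isConfig_resolve hC h.choose_spec.1
  · exact hC

theorem bestMateInit_of_no_blocking {C : Finset (Sym2 P)} {r : P}
    (h : ∀ q, ¬ I.BlockingPair C r q) : I.bestMateInit C r = C := by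
  unfold PrefInstance.bestMateInit
  rw [dif_neg]
  rintro ⟨q, hq, -⟩
  exact h q hq

theorem bestMateInit_eq_resolve {C : Finset (Sym2 P)} {r q : P} (hC : I.IsConfig C)
    (hq : I.BlockingPair C r q) (hmin : ∀ s, I.BlockingPair C r s → I.rank r q ≤ I.rank r s) :
    I.bestMateInit C r = I.resolve C r q := by
  unfold PrefInstance.bestMateInit
  have hex : ∃ q : P, I.BlockingPair C r q ∧
      ∀ s : P, I.BlockingPair C r s → I.rank r q ≤ I.rank r s := ⟨q, hq, hmin⟩
  rw [dif_pos hex]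
  congr 1
  obtain ⟨hbp', hmin'⟩ := hex.choose_spec
  have h1 : I.rank r hex.choose ≤ I.rank r q := hmin' q hq
  have h2 : I.rank r q ≤ I.rank r hex.choose := hmin _ hbp'
  exact I.rank_injOn r hbp'.1 hq.1 (le_antisymm h1 h2)


/-- A loving pair restricted to positive-quota peers. -/
def RLoving (I : PrefInstance P) (p q : P) : Prop :=
  I.G.Adj p q ∧ 0 < I.b p ∧ 0 < I.b q ∧
    (∀ r, I.G.Adj p r → 0 < I.b r → I.rank p q ≤ I.rank p r) ∧
    (∀ r, I.G.Adj q r → 0 < I.b r → I.rank q p ≤ I.rank q r)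

variable (I) in
/-- positive-quota neighbors -/
noncomputable def posNbrs (v : P) : Finset P :=
  Finset.univ.filter fun r => I.G.Adj v r ∧ 0 < I.b r

variable (I) in
/-- most preferred positive-quota neighbor -/
noncomputable def tnext (v : P) : P :=
  if h : (posNbrs I v).Nonempty then
    (Finset.exists_min_image (posNbrs I v) (I.rank v) h).choose else v

theorem mem_posNbrs {v r : P} : r ∈ posNbrs I v ↔ I.G.Adj v r ∧ 0 < I.b r := by
  simp [posNbrs]

theorem tnext_spec {v : P} (h : (posNbrs I v).Nonempty) :
    I.G.Adj v (tnext I v) ∧ 0 < I.b (tnext I v) ∧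
      ∀ r, I.G.Adj v r → 0 < I.b r → I.rank v (tnext I v) ≤ I.rank v r := by
  unfold tnext; rw [dif_pos h]
  obtain ⟨hm, hmin⟩ := (Finset.exists_min_image (posNbrs I v) (I.rank v) h).choose_spec
  obtain ⟨h1, h2⟩ := mem_posNbrs.1 hm
  exact ⟨h1, h2, fun r hr1 hr2 => hmin r (mem_posNbrs.2 ⟨hr1, hr2⟩)⟩

theorem exists_rloving (hI : I.Acyclic) {p₀ q₀ : P} (hadj : I.G.Adj p₀ q₀)
    (hb : 0 < I.b p₀) (hb' : 0 < I.b q₀) : ∃ p q, RLoving I p q := by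
  classical
  set a : ℕ → P := fun n => (tnext I)^[n] p₀ with ha
  have ha_succ : ∀ n, a (n + 1) = tnext I (a n) := fun n => by
    rw [ha]; simp only [Function.iterate_succ_apply']
  -- the invariant along the sequence
  have haux : ∀ n, 0 < I.b (a n) ∧ (posNbrs I (a n)).Nonempty := by
    intro n
    induction n with
    | zero =>
      refine ⟨hb, ⟨q₀, ?_⟩⟩
      simp only [posNbrs, Finset.mem_filter]
      exact ⟨Finset.mem_univ _, hadj, hb'⟩
    | succ n ih =>
      obtain ⟨hbn, hne⟩ := ih
      obtain ⟨h1, h2, _⟩ := tnext_spec (I := I) hne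
      rw [← ha_succ] at h1 h2
      refine ⟨h2, ⟨a n, ?_⟩⟩
      simp only [posNbrs, Finset.mem_filter]
      exact ⟨Finset.mem_univ _, h1.symm, hbn⟩
  have hadj_succ : ∀ n, I.G.Adj (a n) (a (n + 1)) := by
    intro n
    rw [ha_succ]
    exact (tnext_spec (haux n).2).1
  have hmin_succ : ∀ n r, I.G.Adj (a n) r → 0 < I.b r →
      I.rank (a n) (a (n + 1)) ≤ I.rank (a n) r := by
    intro n r h1 h2
    rw [ha_succ]
    exact (tnext_spec (haux n).2).2.2 r h1 h2
  by_cases hA : ∃ n, a (n + 2) = a n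
  · -- a loving pair
    obtain ⟨n, hn⟩ := hA
    refine ⟨a n, a (n + 1), hadj_succ n, (haux n).1, (haux (n + 1)).1, ?_, ?_⟩
    · exact hmin_succ n
    · intro r h1 h2
      have := hmin_succ (n + 1) r h1 h2
      rwa [hn] at this
  · push_neg at hA
    exfalso
    -- build a preference cycle
    have hnontriv : ∀ n, a (n + 1) ≠ a n := fun n h => (hadj_succ n).ne' h
    have hex : ∃ d, 0 < d ∧ ∃ i, a (i + d) = a i := by
      obtain ⟨x, y, hxy, hfxy⟩ := Finite.exists_ne_map_eq_of_infinite a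
      rcases lt_or_gt_of_ne hxy with h | h
      · exact ⟨y - x, by omega, x, by rw [show x + (y - x) = y by omega]; exact hfxy.symm⟩
      · exact ⟨x - y, by omega, y, by rw [show y + (x - y) = x by omega]; exact hfxy⟩
    set k := Nat.find hex with hk
    obtain ⟨hkpos, i, hper0⟩ : 0 < k ∧ ∃ i, a (i + k) = a i := Nat.find_spec hex
    have hkmin : ∀ d, d < k → ¬(0 < d ∧ ∃ i, a (i + d) = a i) := fun d hd => Nat.find_min hex hd
    have hk3 : 3 ≤ k := by
      rcases (by omega : k = 1 ∨ k = 2 ∨ 3 ≤ k) with h | h | h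
      · rw [h] at hper0; exact absurd hper0 (hnontriv i)
      · rw [h] at hper0; exact absurd hper0 (hA i)
      · exact h
    -- periodicity from index i on
    have hshift : ∀ m n, a (m + n) = (tnext I)^[n] (a m) := by
      intro m n
      rw [ha]
      simp only [Nat.add_comm m n, Function.iterate_add_apply]
    have hper : ∀ n, a (i + n + k) = a (i + n) := by
      intro n
      have h1 : a (i + n + k) = (tnext I)^[n] (a (i + k)) := by
        rw [show i + n + k = (i + k) + n by omega, hshift]
      rw [h1, hper0, ← hshift]
    have hpermod : ∀ n, a (i + n % k) = a (i + n) := by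
      intro n
      induction n using Nat.strong_induction_on with
      | _ n ih =>
        rcases lt_or_ge n k with h | h
        · rw [Nat.mod_eq_of_lt h]
        · have h1 : n % k = (n - k) % k := by
            conv_lhs => rw [show n = (n - k) + k by omega]
            rw [Nat.add_mod_right]
          rw [h1, ih (n - k) (by omega), ← hper (n - k), show i + (n - k) + k = i + n by omega]
    have hinj : ∀ s s', s < k → s' < k → a (i + s) = a (i + s') → s = s' := by
      have key : ∀ s s', s < s' → s' < k → a (i + s) ≠ a (i + s') := by
        intro s s' hss hs'k heq
        exact hkmin (s' - s) (by omega) ⟨by omega, i + s,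
          by rw [show i + s + (s' - s) = i + s' by omega]; exact heq.symm⟩
      intro s s' h1 h2 heq
      rcases lt_trichotomy s s' with h | h | h
      · exact absurd heq (key s s' h h2)
      · exact h
      · exact absurd heq.symm (key s' s h h1)
    haveI : NeZero k := ⟨by omega⟩
    set f : ZMod k → P := fun m => a (i + m.val) with hf
    have hfinj : Function.Injective f := by
      intro m m' h
      have := hinj m.val m'.val (ZMod.val_lt m) (ZMod.val_lt m') h
      exact (ZMod.val_injective k) this
    -- val computations
    have hval1 : ∀ m : ZMod k, (m + 1).val = (m.val + 1) % k := by
      intro m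
      rw [ZMod.val_add]
      congr 1
      rw [ZMod.val_one_eq_one_mod, Nat.mod_eq_of_lt (by omega)]
    have hvalm1 : ∀ m : ZMod k, (m - 1).val = (m.val + (k - 1)) % k := by
      intro m
      have hm1 : (-1 : ZMod k) = ((k - 1 : ℕ) : ZMod k) := by
        have : ((k : ℕ) : ZMod k) = 0 := ZMod.natCast_self k
        rw [show (k - 1 : ℕ) = k - 1 by rfl, Nat.cast_sub (by omega), this, Nat.cast_one]
        ring
      rw [sub_eq_add_neg, hm1, ZMod.val_add, ZMod.val_cast_of_lt (by omega)]
    -- the cycle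
    refine hI ⟨k, f, hk3, hfinj, ?_⟩
    intro m
    have e1 : f (m + 1) = a (i + (m.val + 1)) := by
      show a (i + (m + 1).val) = _
      rw [hval1, hpermod]
    have e2 : f (m - 1) = a (i + (m.val + (k - 1))) := by
      show a (i + (m - 1).val) = _
      rw [hvalm1, hpermod]
    set n := i + (m.val + (k - 1)) with hn
    have g0 : a n = f (m - 1) := e2.symm
    have g1 : a (n + 1) = f m := by
      rw [show n + 1 = i + m.val + k by omega, hper]
    have g2 : a (n + 2) = f (m + 1) := by
      rw [show n + 2 = i + (m.val + 1) + k by omega, hper, e1]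
    have hne2 : a (n + 2) ≠ a n := by
      rw [g2, g0]
      intro h
      have := hfinj h
      have h2 : (2 : ZMod k) = 0 := by linear_combination this
      have h3 : ((2 : ℕ) : ZMod k) = 0 := by rw [Nat.cast_ofNat]; exact h2
      rw [ZMod.natCast_eq_zero_iff] at h3
      have := Nat.le_of_dvd (by omega) h3
      omega
    have hadj2 : I.G.Adj (a (n + 1)) (a n) := (hadj_succ n).symm
    have hadj3 : I.G.Adj (a (n + 1)) (a (n + 2)) := by
      rw [show n + 2 = (n + 1) + 1 by omega]
      exact hadj_succ (n + 1)
    have hlt : I.rank (a (n + 1)) (a (n + 2)) < I.rank (a (n + 1)) (a n) := by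
      have hle := hmin_succ (n + 1) (a n) hadj2 (haux n).1
      rw [show n + 1 + 1 = n + 2 by omega] at hle
      rcases hle.lt_or_eq with h | h
      · exact h
      · exact absurd (I.rank_injOn (a (n + 1)) hadj3 hadj2 h) hne2
    rw [← g1, ← g2, ← g0]
    exact ⟨hadj3, hadj2, hlt⟩


theorem rloving_symm {p q : P} (h : RLoving I p q) : RLoving I q p :=
  ⟨h.1.symm, h.2.2.1, h.2.1, h.2.2.2.2, h.2.2.2.1⟩

variable (I) in
/-- The reduced instance: delete the edge `{p,q}` and decrement both quotas. -/
noncomputable def reduced (p q : P) : PrefInstance P where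
  G := I.G.deleteEdges {s(p, q)}
  b := Function.update (Function.update I.b p (I.b p - 1)) q (I.b q - 1)
  rank := I.rank
  rank_injOn := fun v => (I.rank_injOn v).mono fun r hr => by
    simp only [Set.mem_setOf_eq, SimpleGraph.deleteEdges_adj] at hr ⊢
    exact hr.1

theorem reduced_adj {p q x y : P} :
    (reduced I p q).G.Adj x y ↔ I.G.Adj x y ∧ s(x, y) ≠ s(p, q) := by
  simp [reduced, SimpleGraph.deleteEdges_adj]

theorem reduced_rank {p q : P} : (reduced I p q).rank = I.rank := rfl

theorem reduced_b_p {p q : P} (hpq : p ≠ q) : (reduced I p q).b p = I.b p - 1 := by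
  simp [reduced, Function.update, hpq]

theorem reduced_b_q {p q : P} : (reduced I p q).b q = I.b q - 1 := by
  simp [reduced, Function.update]

theorem reduced_b_ne {p q x : P} (hx : x ≠ p) (hx' : x ≠ q) :
    (reduced I p q).b x = I.b x := by
  simp [reduced, Function.update, hx, hx']

theorem reduced_b_le {p q x : P} : (reduced I p q).b x ≤ I.b x := by
  by_cases h1 : x = q
  · subst h1; rw [reduced_b_q]; omega
  by_cases h2 : x = p
  · subst h2
    by_cases h3 : x = q
    · exact absurd h3 h1
    · rw [reduced_b_p h3]; omega
  · rw [reduced_b_ne h2 h1]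

theorem reduced_acyclic {p q : P} (hI : I.Acyclic) : (reduced I p q).Acyclic := by
  rintro ⟨k, f, hk, hinj, hcyc⟩
  refine hI ⟨k, f, hk, hinj, fun i => ?_⟩
  obtain ⟨h1, h2, h3⟩ := hcyc i
  exact ⟨(reduced_adj.1 h1).1, (reduced_adj.1 h2).1, h3⟩

theorem sum_reduced_b {p q : P} (hpq : p ≠ q) (hp : 0 < I.b p) (hq : 0 < I.b q) :
    ∑ x : P, (reduced I p q).b x = (∑ x : P, I.b x) - 2 ∧ 2 ≤ ∑ x : P, I.b x := by
  have hqmem : q ∈ (Finset.univ : Finset P) := Finset.mem_univ q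
  have hpmem : p ∈ (Finset.univ : Finset P) \ {q} := by
    simp [hpq]
  have e1 : ∑ x : P, (reduced I p q).b x
      = (I.b q - 1) + ∑ x ∈ (Finset.univ \ {q} : Finset P), Function.update I.b p (I.b p - 1) x := by
    rw [show (reduced I p q).b = Function.update (Function.update I.b p (I.b p - 1)) q (I.b q - 1) from rfl]
    rw [Finset.sum_update_of_mem hqmem]
  have e2 : ∑ x ∈ (Finset.univ \ {q} : Finset P), Function.update I.b p (I.b p - 1) x
      = (I.b p - 1) + ∑ x ∈ ((Finset.univ \ {q} : Finset P) \ {p}), I.b x := by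
    rw [Finset.sum_update_of_mem hpmem]
  have e3 : ∑ x : P, I.b x = I.b q + ∑ x ∈ (Finset.univ \ {q} : Finset P), I.b x := by
    rw [← Finset.sum_update_of_mem hqmem]
    congr 1
    ext x
    by_cases h : x = q <;> simp [Function.update, h]
  have e4 : ∑ x ∈ (Finset.univ \ {q} : Finset P), I.b x
      = I.b p + ∑ x ∈ ((Finset.univ \ {q} : Finset P) \ {p}), I.b x := by
    rw [← Finset.sum_update_of_mem hpmem]
    apply Finset.sum_congr rfl
    intro x hx
    by_cases h : x = p <;> simp [Function.update, h]
  constructor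
  · rw [e1, e2, e3, e4]; omega
  · rw [e3, e4]; omega

theorem mates_sdiff_ne {C : Finset (Sym2 P)} {p q x : P} (hx : x ≠ p) (hx' : x ≠ q) :
    mates (C \ {s(p, q)}) x = mates C x := by
  ext r
  rw [mem_mates, mem_mates, Finset.mem_sdiff, Finset.mem_singleton]
  constructor
  · exact fun h => h.1
  · intro h
    refine ⟨h, fun hc => ?_⟩
    rcases Sym2.eq_iff.1 hc with ⟨rfl, rfl⟩ | ⟨rfl, rfl⟩
    · exact hx rfl
    · exact hx' rfl

theorem mates_sdiff_p {C : Finset (Sym2 P)} {p q : P} :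
    mates (C \ {s(p, q)}) p = (mates C p).erase q := by
  ext r
  rw [mem_mates, Finset.mem_erase, mem_mates, Finset.mem_sdiff, Finset.mem_singleton,
    Sym2.congr_right]
  tauto

theorem mates_sdiff_q {C : Finset (Sym2 P)} {p q : P} :
    mates (C \ {s(p, q)}) q = (mates C q).erase p := by
  rw [Sym2.eq_swap]
  exact mates_sdiff_p

theorem isConfig_reduced {C : Finset (Sym2 P)} {p q : P} (hC : I.IsConfig C)
    (he : s(p, q) ∈ C) (hpq : p ≠ q) :
    (reduced I p q).IsConfig (C \ {s(p, q)}) := by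
  constructor
  · intro f hf
    rw [Finset.mem_sdiff, Finset.mem_singleton] at hf
    rw [show (reduced I p q).G = I.G.deleteEdges {s(p,q)} from rfl,
      SimpleGraph.edgeSet_deleteEdges, Set.mem_diff]
    exact ⟨hC.1 _ hf.1, by simpa using hf.2⟩
  · intro z
    by_cases h1 : z = p
    · subst h1
      rw [mates_sdiff_p, reduced_b_p hpq, Finset.card_erase_of_mem (mem_mates.2 he)]
      have := hC.2 z
      omega
    by_cases h2 : z = q
    · subst h2
      rw [mates_sdiff_q, reduced_b_q,
        Finset.card_erase_of_mem (mem_mates.2 (by rwa [Sym2.eq_swap]))]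
      have := hC.2 z
      omega
    · rw [mates_sdiff_ne h1 h2, reduced_b_ne h1 h2]
      exact hC.2 z


/-- Core: removing the top mate `q` from `p`'s mates and decrementing the quota
does not change `p`'s willingness towards a positive-quota neighbor. -/
theorem willing_core {C : Finset (Sym2 P)} {p q y : P} (hC : I.IsConfig C)
    (hq : q ∈ mates C p)
    (htop : ∀ r, I.G.Adj p r → 0 < I.b r → I.rank p q ≤ I.rank p r)
    (hxy : I.G.Adj p y) (hby : 0 < I.b y) :
    ((mates C p).card < I.b p ∨ ∃ w ∈ mates C p, I.rank p y < I.rank p w)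
      ↔ (((mates C p).erase q).card < I.b p - 1 ∨
        ∃ w ∈ (mates C p).erase q, I.rank p y < I.rank p w) := by
  have hcard : ((mates C p).erase q).card = (mates C p).card - 1 :=
    Finset.card_erase_of_mem hq
  have hbp : 1 ≤ I.b p := b_pos_of_mem_mates hC (mem_mates_comm.1 hq)
  have hcpos : 1 ≤ (mates C p).card := Finset.card_pos.2 ⟨q, hq⟩
  constructor
  · rintro (h | ⟨w, hw, hr⟩)
    · left; omega
    · right
      refine ⟨w, Finset.mem_erase.2 ⟨?_, hw⟩, hr⟩
      rintro rfl
      exact absurd (htop y hxy hby) (by omega)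
  · rintro (h | ⟨w, hw, hr⟩)
    · left; omega
    · exact Or.inr ⟨w, (Finset.mem_erase.1 hw).2, hr⟩

theorem willing_iff {C : Finset (Sym2 P)} {p q x y : P} (hC : I.IsConfig C)
    (he : s(p, q) ∈ C) (hpq : RLoving I p q)
    (hxy : I.G.Adj x y) (hby : 0 < I.b y) :
    I.Willing C x y ↔ (reduced I p q).Willing (C \ {s(p, q)}) x y := by
  have hpq' : p ≠ q := hpq.1.ne
  unfold PrefInstance.Willing PrefInstance.UnderMated
  rw [reduced_rank]
  by_cases h1 : x = p
  · subst h1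
    rw [mates_sdiff_p, reduced_b_p hpq']
    exact willing_core hC (mem_mates.2 he) hpq.2.2.2.1 hxy hby
  by_cases h2 : x = q
  · subst h2
    rw [mates_sdiff_q, reduced_b_q]
    have he' : s(x, p) ∈ C := by rwa [Sym2.eq_swap]
    exact willing_core hC (mem_mates.2 he') hpq.2.2.2.2 hxy hby
  · rw [mates_sdiff_ne h1 h2, reduced_b_ne h1 h2]

theorem blockingPair_iff {C : Finset (Sym2 P)} {p q x y : P} (hC : I.IsConfig C)
    (he : s(p, q) ∈ C) (hpq : RLoving I p q) :
    I.BlockingPair C x y ↔ (reduced I p q).BlockingPair (C \ {s(p, q)}) x y := by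
  have hC' := isConfig_reduced hC he hpq.1.ne
  unfold PrefInstance.BlockingPair
  constructor
  · rintro ⟨hadj, hnot, hw1, hw2⟩
    have hne : s(x, y) ≠ s(p, q) := fun h => hnot (h ▸ he)
    have hby : 0 < I.b y := b_pos_of_willing hC hw2
    have hbx : 0 < I.b x := b_pos_of_willing hC hw1
    refine ⟨reduced_adj.2 ⟨hadj, hne⟩, ?_, ?_, ?_⟩
    · rw [Finset.mem_sdiff]; tauto
    · exact (willing_iff hC he hpq hadj hby).1 hw1
    · exact (willing_iff hC he hpq hadj.symm hbx).1 hw2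
  · rintro ⟨hadj', hnot, hw1, hw2⟩
    obtain ⟨hadj, hne⟩ := reduced_adj.1 hadj'
    have hby : 0 < I.b y :=
      lt_of_lt_of_le (b_pos_of_willing hC' hw2) reduced_b_le
    have hbx : 0 < I.b x :=
      lt_of_lt_of_le (b_pos_of_willing hC' hw1) reduced_b_le
    refine ⟨hadj, fun h => hnot (Finset.mem_sdiff.2 ⟨h, by simpa using hne⟩), ?_, ?_⟩
    · exact (willing_iff hC he hpq hadj hby).2 hw1
    · exact (willing_iff hC he hpq hadj.symm hbx).2 hw2

theorem dropEdges_subset {C : Finset (Sym2 P)} {z : P} : I.dropEdges C z ⊆ C := by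
  intro f hf
  obtain ⟨-, w, hw, -, rfl⟩ := mem_dropEdges.1 hf
  exact mem_mates.1 hw

/-- Core for the dropEdges transfer at the special endpoint `p`. -/
theorem dropEdges_core {C : Finset (Sym2 P)} {p q y : P} (hC : I.IsConfig C)
    (hq : q ∈ mates C p)
    (htop : ∀ r, I.G.Adj p r → 0 < I.b r → I.rank p q ≤ I.rank p r)
    (hxy : I.G.Adj p y) (hby : 0 < I.b y) (hwill : I.Willing C p y) :
    (if (mates C p).card < I.b p then (∅ : Finset (Sym2 P))
      else ((mates C p).filter fun w => ∀ r ∈ mates C p, I.rank p r ≤ I.rank p w).image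
        fun w => s(p, w))
    = if ((mates C p).erase q).card < I.b p - 1 then ∅
      else (((mates C p).erase q).filter fun w =>
          ∀ r ∈ (mates C p).erase q, I.rank p r ≤ I.rank p w).image
        fun w => s(p, w) := by
  have hcard : ((mates C p).erase q).card = (mates C p).card - 1 :=
    Finset.card_erase_of_mem hq
  have hbp : 1 ≤ I.b p := b_pos_of_mem_mates hC (mem_mates_comm.1 hq)
  have hcpos : 1 ≤ (mates C p).card := Finset.card_pos.2 ⟨q, hq⟩
  have hadjq : I.G.Adj p q := adj_of_mem_mates hC hq
  have hstrict : ∀ w ∈ mates C p, w ≠ q → I.rank p q < I.rank p w := by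
    intro w hw hwq
    rcases (htop w (adj_of_mem_mates hC hw) (b_pos_of_mem_mates hC hw)).lt_or_eq with h | h
    · exact h
    · exact absurd ((I.rank_injOn p) hadjq (adj_of_mem_mates hC hw) h).symm hwq
  by_cases hcase : ((mates C p).erase q).Nonempty
  · obtain ⟨w₀, hw₀⟩ := hcase
    have hw₀m := (Finset.mem_erase.1 hw₀).2
    have hw₀q := (Finset.mem_erase.1 hw₀).1
    by_cases hu : (mates C p).card < I.b p
    · rw [if_pos hu, if_pos (by omega)]
    · rw [if_neg hu, if_neg (by omega)]
      congr 1
      ext w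
      simp only [Finset.mem_filter, Finset.mem_erase]
      constructor
      · rintro ⟨hw, hmax⟩
        have hwq : w ≠ q := by
          rintro rfl
          exact absurd (hmax w₀ hw₀m) (not_le.2 (hstrict w₀ hw₀m hw₀q))
        exact ⟨⟨hwq, hw⟩, fun r hr => hmax r hr.2⟩
      · rintro ⟨⟨hwq, hw⟩, hmax⟩
        refine ⟨hw, fun r hr => ?_⟩
        by_cases hrq : r = q
        · subst hrq; exact le_of_lt (hstrict w hw hwq)
        · exact hmax r ⟨hrq, hr⟩
  · have hmq : mates C p = {q} := by
      apply Finset.eq_singleton_iff_unique_mem.2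
      refine ⟨hq, fun w hw => ?_⟩
      by_contra hwq
      exact hcase ⟨w, Finset.mem_erase.2 ⟨hwq, hw⟩⟩
    have hc1 : (mates C p).card = 1 := by rw [hmq]; simp
    have hund : 1 < I.b p := by
      rcases hwill with h | ⟨w, hw, hlt⟩
      · unfold PrefInstance.UnderMated at h; omega
      · rw [hmq, Finset.mem_singleton] at hw
        subst hw
        exact absurd (htop y hxy hby) (by omega)
    rw [if_pos (by omega), if_pos (by omega)]

theorem dropEdges_eq {C : Finset (Sym2 P)} {p q x y : P} (hC : I.IsConfig C)
    (he : s(p, q) ∈ C) (hpq : RLoving I p q)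
    (hadj : I.G.Adj x y) (hby : 0 < I.b y) (hwill : I.Willing C x y) :
    I.dropEdges C x = (reduced I p q).dropEdges (C \ {s(p, q)}) x := by
  have hpq' : p ≠ q := hpq.1.ne
  unfold PrefInstance.dropEdges
  rw [reduced_rank]
  by_cases h1 : x = p
  · subst h1
    rw [mates_sdiff_p, reduced_b_p hpq']
    exact dropEdges_core hC (mem_mates.2 he) hpq.2.2.2.1 hadj hby hwill
  by_cases h2 : x = q
  · subst h2
    rw [mates_sdiff_q, reduced_b_q]
    have he' : s(x, p) ∈ C := by rwa [Sym2.eq_swap]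
    exact dropEdges_core hC (mem_mates.2 he') hpq.2.2.2.2 hadj hby hwill
  · rw [mates_sdiff_ne h1 h2, reduced_b_ne h1 h2]

theorem resolve_eq {C : Finset (Sym2 P)} {p q x y : P} (hC : I.IsConfig C)
    (he : s(p, q) ∈ C) (hpq : RLoving I p q) (hbp : I.BlockingPair C x y) :
    s(p, q) ∈ I.resolve C x y ∧
      I.resolve C x y \ {s(p, q)} = (reduced I p q).resolve (C \ {s(p, q)}) x y := by
  obtain ⟨hadj, hnot, hw1, hw2⟩ := hbp
  have hby : 0 < I.b y := b_pos_of_willing hC hw2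
  have hbx : 0 < I.b x := b_pos_of_willing hC hw1
  have h1 : I.dropEdges C x = (reduced I p q).dropEdges (C \ {s(p, q)}) x :=
    dropEdges_eq hC he hpq hadj hby hw1
  have h2 : I.dropEdges C y = (reduced I p q).dropEdges (C \ {s(p, q)}) y :=
    dropEdges_eq hC he hpq hadj.symm hbx hw2
  have hnx : s(p, q) ∉ I.dropEdges C x := by
    rw [h1]
    intro h
    exact (Finset.mem_sdiff.1 (dropEdges_subset h)).2 (Finset.mem_singleton_self _)
  have hny : s(p, q) ∉ I.dropEdges C y := by
    rw [h2]
    intro h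
    exact (Finset.mem_sdiff.1 (dropEdges_subset h)).2 (Finset.mem_singleton_self _)
  have hexy : s(x, y) ≠ s(p, q) := fun h => hnot (h ▸ he)
  constructor
  · exact mem_resolve.2 (Or.inr ⟨he, hnx, hny⟩)
  · unfold PrefInstance.resolve
    rw [← h1, ← h2]
    ext f
    simp only [Finset.mem_sdiff, Finset.mem_insert, Finset.mem_singleton, Finset.mem_union]
    constructor
    · rintro ⟨hf | hf, hfe⟩
      · exact Or.inl hf
      · exact Or.inr ⟨⟨hf.1, hfe⟩, hf.2⟩
    · rintro (hf | ⟨⟨hf, hfe⟩, hd⟩)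
      · exact ⟨Or.inl hf, hf ▸ hexy⟩
      · exact ⟨Or.inr ⟨hf, hd⟩, hfe⟩

theorem bestMateInit_step {C : Finset (Sym2 P)} {p q : P} (hC : I.IsConfig C)
    (he : s(p, q) ∈ C) (hpq : RLoving I p q) (r : P) :
    s(p, q) ∈ I.bestMateInit C r ∧
      I.bestMateInit C r \ {s(p, q)} = (reduced I p q).bestMateInit (C \ {s(p, q)}) r := by
  unfold PrefInstance.bestMateInit
  by_cases hex : ∃ c : P, I.BlockingPair C r c ∧
      ∀ u : P, I.BlockingPair C r u → I.rank r c ≤ I.rank r u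
  · have hex' : ∃ c : P, (reduced I p q).BlockingPair (C \ {s(p, q)}) r c ∧
        ∀ u : P, (reduced I p q).BlockingPair (C \ {s(p, q)}) r u →
          (reduced I p q).rank r c ≤ (reduced I p q).rank r u := by
      obtain ⟨c, hc, hmin⟩ := hex
      exact ⟨c, (blockingPair_iff hC he hpq).1 hc,
        fun u hu => hmin u ((blockingPair_iff hC he hpq).2 hu)⟩
    rw [dif_pos hex, dif_pos hex']
    obtain ⟨hbp1, hmin1⟩ := hex.choose_spec
    obtain ⟨hbp2', hmin2'⟩ := hex'.choose_spec
    have hbp2 : I.BlockingPair C r hex'.choose := (blockingPair_iff hC he hpq).2 hbp2'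
    have hbp1' : (reduced I p q).BlockingPair (C \ {s(p, q)}) r hex.choose :=
      (blockingPair_iff hC he hpq).1 hbp1
    have hcc : hex.choose = hex'.choose := by
      refine (I.rank_injOn r) hbp1.1 hbp2.1 (le_antisymm (hmin1 _ hbp2) ?_)
      exact hmin2' _ hbp1'
    rw [← hcc]
    exact resolve_eq hC he hpq hbp1
  · have hex' : ¬ ∃ c : P, (reduced I p q).BlockingPair (C \ {s(p, q)}) r c ∧
        ∀ u : P, (reduced I p q).BlockingPair (C \ {s(p, q)}) r u →
          (reduced I p q).rank r c ≤ (reduced I p q).rank r u := by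
      rintro ⟨c, hc, hmin⟩
      exact hex ⟨c, (blockingPair_iff hC he hpq).2 hc,
        fun u hu => hmin u ((blockingPair_iff hC he hpq).1 hu)⟩
    rw [dif_neg hex, dif_neg hex']
    exact ⟨he, rfl⟩


theorem isConfig_foldl {C : Finset (Sym2 P)} (hC : I.IsConfig C) (l : List P) :
    I.IsConfig (l.foldl I.bestMateInit C) := by
  induction l generalizing C with
  | nil => exact hC
  | cons r l ih => exact ih (isConfig_bestMateInit hC r)

theorem step_foldl {C : Finset (Sym2 P)} {p q : P} (hC : I.IsConfig C)
    (he : s(p, q) ∈ C) (hpq : RLoving I p q) (l : List P) :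
    I.IsConfig (l.foldl I.bestMateInit C) ∧ s(p, q) ∈ l.foldl I.bestMateInit C ∧
      (l.foldl I.bestMateInit C) \ {s(p, q)}
        = l.foldl (reduced I p q).bestMateInit (C \ {s(p, q)}) := by
  induction l generalizing C with
  | nil => exact ⟨hC, he, rfl⟩
  | cons r l ih =>
    obtain ⟨h1, h2⟩ := bestMateInit_step hC he hpq r
    obtain ⟨ih1, ih2, ih3⟩ := ih (isConfig_bestMateInit hC r) h1
    refine ⟨ih1, ih2, ?_⟩
    simp only [List.foldl_cons]
    rw [ih3, h2]

theorem step_rounds {C : Finset (Sym2 P)} {p q : P} (hC : I.IsConfig C)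
    (he : s(p, q) ∈ C) (hpq : RLoving I p q) (rounds : List (List P)) :
    I.IsConfig (rounds.foldl (fun D l => l.foldl I.bestMateInit D) C) ∧
      s(p, q) ∈ rounds.foldl (fun D l => l.foldl I.bestMateInit D) C ∧
      (rounds.foldl (fun D l => l.foldl I.bestMateInit D) C) \ {s(p, q)}
        = rounds.foldl (fun D l => l.foldl (reduced I p q).bestMateInit D) (C \ {s(p, q)}) := by
  induction rounds generalizing C with
  | nil => exact ⟨hC, he, rfl⟩
  | cons l rounds ih =>
    obtain ⟨h1, h2, h3⟩ := step_foldl hC he hpq l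
    obtain ⟨ih1, ih2, ih3⟩ := ih h1 h2
    refine ⟨ih1, ih2, ?_⟩
    simp only [List.foldl_cons]
    rw [ih3, h3]

theorem willing_top {C : Finset (Sym2 P)} {p q : P} (hC : I.IsConfig C)
    (hbp : 0 < I.b p) (hadj : I.G.Adj p q)
    (htop : ∀ r, I.G.Adj p r → 0 < I.b r → I.rank p q ≤ I.rank p r)
    (hnm : s(p, q) ∉ C) : I.Willing C p q := by
  by_cases hu : (mates C p).card < I.b p
  · exact Or.inl hu
  · have hne : (mates C p).Nonempty := Finset.card_pos.1 (by omega : 0 < (mates C p).card)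
    obtain ⟨w, hw⟩ := hne
    have hwq : w ≠ q := fun h => hnm (mem_mates.1 (h ▸ hw))
    have hlt : I.rank p q < I.rank p w := by
      rcases (htop w (adj_of_mem_mates hC hw) (b_pos_of_mem_mates hC hw)).lt_or_eq with h | h
      · exact h
      · exact absurd ((I.rank_injOn p) hadj (adj_of_mem_mates hC hw) h).symm hwq
    exact Or.inr ⟨w, hw, hlt⟩

theorem blocking_of_rloving {C : Finset (Sym2 P)} {p q : P} (hC : I.IsConfig C)
    (hpq : RLoving I p q) (hnm : s(p, q) ∉ C) : I.BlockingPair C p q :=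
  ⟨hpq.1, hnm, willing_top hC hpq.2.1 hpq.1 hpq.2.2.2.1 hnm,
    willing_top hC hpq.2.2.1 hpq.1.symm hpq.2.2.2.2 (by rwa [Sym2.eq_swap])⟩

theorem e_mem_after_round {C : Finset (Sym2 P)} {p q : P} (hC : I.IsConfig C)
    (hpq : RLoving I p q) (l : List P) (hp : p ∈ l) :
    s(p, q) ∈ l.foldl I.bestMateInit C := by
  obtain ⟨l₁, l₂, rfl⟩ := List.append_of_mem hp
  rw [List.foldl_append]
  simp only [List.foldl_cons]
  set C₁ := l₁.foldl I.bestMateInit C with hC₁def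
  have hC₁ : I.IsConfig C₁ := isConfig_foldl hC l₁
  have key : s(p, q) ∈ I.bestMateInit C₁ p := by
    by_cases hmem : s(p, q) ∈ C₁
    · exact (bestMateInit_step hC₁ hmem hpq p).1
    · have hbp : I.BlockingPair C₁ p q := blocking_of_rloving hC₁ hpq hmem
      have hmin : ∀ u, I.BlockingPair C₁ p u → I.rank p q ≤ I.rank p u := fun u hu =>
        hpq.2.2.2.1 u hu.1 (b_pos_of_willing hC₁ hu.2.2.2)
      rw [bestMateInit_eq_resolve hC₁ hbp hmin]
      exact mem_resolve.2 (Or.inl rfl)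
  exact (step_foldl (isConfig_bestMateInit hC₁ p) key hpq l₂).2.1

theorem isStable_transfer {C : Finset (Sym2 P)} {p q : P} (hC : I.IsConfig C)
    (he : s(p, q) ∈ C) (hpq : RLoving I p q) :
    I.IsStable C ↔ (reduced I p q).IsStable (C \ {s(p, q)}) := by
  constructor
  · intro hS
    exact ⟨isConfig_reduced hC he hpq.1.ne,
      fun x y h => hS.2 x y ((blockingPair_iff hC he hpq).2 h)⟩
  · intro hS
    exact ⟨hC, fun x y h => hS.2 x y ((blockingPair_iff hC he hpq).1 h)⟩

theorem e_mem_stable {D : Finset (Sym2 P)} {p q : P} (hpq : RLoving I p q)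
    (hD : I.IsStable D) : s(p, q) ∈ D := by
  by_contra h
  exact hD.2 p q (blocking_of_rloving hD.1 hpq h)

theorem foldl_of_stable {C : Finset (Sym2 P)} (hS : I.IsStable C) (l : List P) :
    l.foldl I.bestMateInit C = C := by
  induction l with
  | nil => rfl
  | cons r l ih =>
    simp only [List.foldl_cons]
    rw [bestMateInit_of_no_blocking (fun u => hS.2 r u), ih]

theorem foldl_rounds_of_stable {C : Finset (Sym2 P)} (hS : I.IsStable C)
    (rounds : List (List P)) :
    rounds.foldl (fun D l => l.foldl I.bestMateInit D) C = C := by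
  induction rounds with
  | nil => rfl
  | cons l rounds ih =>
    simp only [List.foldl_cons]
    rw [foldl_of_stable hS l, ih]

theorem config_eq_empty (hno : ¬ ∃ x y, I.G.Adj x y ∧ 0 < I.b x ∧ 0 < I.b y)
    {C : Finset (Sym2 P)} (hC : I.IsConfig C) : C = ∅ := by
  rw [Finset.eq_empty_iff_forall_notMem]
  intro f
  induction f using Sym2.ind with
  | _ x y =>
    intro hf
    have hadj : I.G.Adj x y := by
      have := hC.1 _ hf
      rwa [SimpleGraph.mem_edgeSet] at this
    have hby : 0 < I.b y := b_pos_of_mem_mates hC (mem_mates.2 hf)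
    have hbx : 0 < I.b x := b_pos_of_mem_mates hC (mem_mates.2 (by rwa [Sym2.eq_swap]))
    exact hno ⟨x, y, hadj, hbx, hby⟩

theorem isConfig_empty : I.IsConfig (∅ : Finset (Sym2 P)) := by
  constructor
  · intro e he; simp at he
  · intro z
    have : mates (∅ : Finset (Sym2 P)) z = ∅ := by
      ext r; simp [mem_mates]
    rw [this]; simp

theorem isStable_empty (hno : ¬ ∃ x y, I.G.Adj x y ∧ 0 < I.b x ∧ 0 < I.b y) :
    I.IsStable (∅ : Finset (Sym2 P)) := by
  refine ⟨isConfig_empty, fun x y hbp => ?_⟩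
  exact hno ⟨x, y, hbp.1, b_pos_of_willing isConfig_empty hbp.2.2.1,
    b_pos_of_willing isConfig_empty hbp.2.2.2⟩

theorem main_aux (B : ℕ) : ∀ (I : PrefInstance P), I.Acyclic → (∑ x : P, I.b x) = B →
    ∀ C : Finset (Sym2 P), I.IsConfig C → ∀ rounds : List (List P),
    rounds.length = (B + 1) / 2 → (∀ l ∈ rounds, ∀ x : P, l.count x = 1) →
    I.IsStable (rounds.foldl (fun D l => l.foldl I.bestMateInit D) C) ∧
      ∀ D : Finset (Sym2 P), I.IsStable D →
        D = rounds.foldl (fun D l => l.foldl I.bestMateInit D) C := by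
  induction B using Nat.strong_induction_on with
  | _ B ih =>
  intro I hacyc hB C hC rounds hlen hround
  by_cases hno : ∃ x y, I.G.Adj x y ∧ 0 < I.b x ∧ 0 < I.b y
  · obtain ⟨x₀, y₀, hadj₀, hbx₀, hby₀⟩ := hno
    obtain ⟨p, q, hpq⟩ := exists_rloving hacyc hadj₀ hbx₀ hby₀
    obtain ⟨hsum, hB2⟩ := sum_reduced_b hpq.1.ne hpq.2.1 hpq.2.2.1
    rw [hB] at hsum hB2
    obtain ⟨l₀, rest, rfl⟩ : ∃ l₀ rest, rounds = l₀ :: rest := by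
      cases rounds with
      | nil => exfalso; rw [List.length_nil] at hlen; omega
      | cons a b => exact ⟨a, b, rfl⟩
    have hJac : (reduced I p q).Acyclic := reduced_acyclic hacyc
    set C₁ := l₀.foldl I.bestMateInit C with hC₁def
    have hC₁ : I.IsConfig C₁ := isConfig_foldl hC l₀
    have hpmem : p ∈ l₀ := by
      by_contra hnp
      have h0 := List.count_eq_zero.2 hnp
      rw [hround l₀ List.mem_cons_self p] at h0
      omega
    have he₁ : s(p, q) ∈ C₁ := e_mem_after_round hC hpq l₀ hpmem
    obtain ⟨hCf, hef, heq⟩ := step_rounds hC₁ he₁ hpq rest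
    have hrest_len : rest.length = ((B - 2) + 1) / 2 := by
      have : rest.length + 1 = (B + 1) / 2 := by
        rw [← hlen]; simp
      omega
    obtain ⟨hstab', huniq'⟩ := ih (B - 2) (by omega) (reduced I p q) hJac hsum
      (C₁ \ {s(p, q)}) (isConfig_reduced hC₁ he₁ hpq.1.ne) rest hrest_len
      (fun l hl => hround l (List.mem_cons_of_mem _ hl))
    rw [← heq] at hstab' huniq'
    have hfold : (l₀ :: rest).foldl (fun D l => l.foldl I.bestMateInit D) C
        = rest.foldl (fun D l => l.foldl I.bestMateInit D) C₁ := by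
      simp [hC₁def]
    rw [hfold]
    constructor
    · exact (isStable_transfer hCf hef hpq).2 hstab'
    · intro D hD
      have heD : s(p, q) ∈ D := e_mem_stable hpq hD
      have hDeq := huniq' (D \ {s(p, q)}) ((isStable_transfer hD.1 heD hpq).1 hD)
      ext f
      by_cases hfe : f = s(p, q)
      · subst hfe; simp [heD, hef]
      · constructor
        · intro hfD
          have : f ∈ D \ {s(p, q)} := Finset.mem_sdiff.2 ⟨hfD, by simpa using hfe⟩
          rw [hDeq] at this
          exact (Finset.mem_sdiff.1 this).1
        · intro hfF
          have : f ∈ rest.foldl (fun D l => l.foldl I.bestMateInit D) C₁ \ {s(p, q)} :=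
            Finset.mem_sdiff.2 ⟨hfF, by simpa using hfe⟩
          rw [← hDeq] at this
          exact (Finset.mem_sdiff.1 this).1
  · have hCempty : C = ∅ := config_eq_empty hno hC
    have hstab : I.IsStable C := by rw [hCempty]; exact isStable_empty hno
    have hfix : rounds.foldl (fun D l => l.foldl I.bestMateInit D) C = C :=
      foldl_rounds_of_stable hstab rounds
    rw [hfix]
    exact ⟨hstab, fun D hD => by rw [config_eq_empty hno hD.1, hCempty]⟩
end Aux

/-- Periodic best-mate initiatives converge in at most
`⌈B / 2⌉` rounds: in an acyclic instance, starting from any configuration, after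
`⌈B / 2⌉` rounds (a round being a finite sequence of best-mate initiatives in
which each peer takes exactly one best-mate initiative, in arbitrary order), the
resulting configuration is the unique stable configuration of the instance,
where `B` is the sum of all quotas. -/
theorem acyclic_periodic_bestMate_converges (I : PrefInstance P) (hI : I.Acyclic)
    (C : Finset (Sym2 P)) (hC : I.IsConfig C)
    (rounds : List (List P))
    (hlen : rounds.length = ((∑ p : P, I.b p) + 1) / 2)
    (hround : ∀ l ∈ rounds, ∀ p : P, l.count p = 1) :
    I.IsStable (rounds.foldl (fun D l => l.foldl I.bestMateInit D) C) ∧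
      ∀ D : Finset (Sym2 P), I.IsStable D →
        D = rounds.foldl (fun D l => l.foldl I.bestMateInit D) C :=
  Aux.main_aux (∑ p : P, I.b p) I hI rfl C hC rounds hlen hround
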